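/- Let G be a finite simple graph, k ≥ 1 a natural number, and let u and v be adjacent vertices of G such that N(v) ⊆ N[u], where N(v) is the open neighborhood of v and N[u] = N(u) ∪ {u} is the closed neighborhood of u. Then G has a vertex cover of size at most k if and only if G − u has a vertex cover of size at most k − 1. -/
import Mathlib


/-- `X` is a vertex cover of `G`: every edge has at least one endpoint in `X`. -/
def IsVC {V : Type*} (G : SimpleGraph V) (X : Set V) : Prop :=
  ∀ ⦃u w : V⦄, G.Adj u w → u ∈ X ∨ w ∈ X

/-- `G` has a vertex cover of size at most `k`. -/
def HasVC {V : Type*} (G : SimpleGraph V) (k : ℕ) : Prop :=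
  ∃ X : Set V, IsVC G X ∧ X.ncard ≤ k

theorem stmt_9 {V : Type*} [Fintype V] (G : SimpleGraph V) (k : ℕ) (hk : 1 ≤ k)
    (u v : V) (huv : G.Adj u v)
    (hN : G.neighborSet v ⊆ insert u (G.neighborSet u)) :
    HasVC G k ↔ HasVC (G.induce {w : V | w ≠ u}) (k - 1) := by
  constructor
  · rintro ⟨X, hX, hXk⟩
    by_cases hu : u ∈ X
    · refine ⟨Subtype.val ⁻¹' (X \ {u}), ?_, ?_⟩
      · rintro ⟨a, ha⟩ ⟨b, hb⟩ hab
        have hab' : G.Adj a b := hab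
        rcases hX hab' with h | h
        · exact Or.inl ⟨h, ha⟩
        · exact Or.inr ⟨h, hb⟩
      · calc (Subtype.val ⁻¹' (X \ {u})).ncard
            ≤ (X \ {u}).ncard :=
              Set.ncard_le_ncard_of_injOn Subtype.val (fun a ha => ha)
                Subtype.val_injective.injOn (Set.toFinite _)
          _ = X.ncard - 1 := Set.ncard_diff_singleton_of_mem hu
          _ ≤ k - 1 := Nat.sub_le_sub_right hXk 1
    · have hv : v ∈ X := (hX huv).resolve_left hu
      have key : ∀ a b : {w : V | w ≠ u}, G.Adj ↑a ↑b → (a : V) ∈ X →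
          (a : V) ∈ X \ {v} ∨ (b : V) ∈ X \ {v} := by
        rintro ⟨a, ha⟩ ⟨b, hb⟩ hab haX
        by_cases hav : a = v
        · subst hav
          have hbN : b ∈ G.neighborSet a := hab
          have hbu : b ∈ G.neighborSet u := by
            rcases hN hbN with h | h
            · exact absurd h hb
            · exact h
          have hbX : b ∈ X := (hX hbu).resolve_left hu
          exact Or.inr ⟨hbX, hab.ne'⟩
        · exact Or.inl ⟨haX, hav⟩
      refine ⟨Subtype.val ⁻¹' (X \ {v}), ?_, ?_⟩
      · rintro a b hab
        have hab' : G.Adj ↑a ↑b := hab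
        rcases hX hab' with h | h
        · exact key a b hab' h
        · exact (key b a hab'.symm h).symm
      · calc (Subtype.val ⁻¹' (X \ {v})).ncard
            ≤ (X \ {v}).ncard :=
              Set.ncard_le_ncard_of_injOn Subtype.val (fun a ha => ha)
                Subtype.val_injective.injOn (Set.toFinite _)
          _ = X.ncard - 1 := Set.ncard_diff_singleton_of_mem hv
          _ ≤ k - 1 := Nat.sub_le_sub_right hXk 1
  · rintro ⟨Y, hY, hYk⟩
    refine ⟨insert u (Subtype.val '' Y), ?_, ?_⟩
    · intro a b hab
      by_cases ha : a = u
      · exact Or.inl (by rw [ha]; exact Set.mem_insert _ _)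
      · by_cases hb : b = u
        · exact Or.inr (by rw [hb]; exact Set.mem_insert _ _)
        · have hab' : (G.induce {w : V | w ≠ u}).Adj ⟨a, ha⟩ ⟨b, hb⟩ := hab
          rcases hY hab' with h | h
          · exact Or.inl (Set.mem_insert_iff.mpr (Or.inr ⟨_, h, rfl⟩))
          · exact Or.inr (Set.mem_insert_iff.mpr (Or.inr ⟨_, h, rfl⟩))
    · calc (insert u (Subtype.val '' Y)).ncard
          ≤ (Subtype.val '' Y).ncard + 1 := Set.ncard_insert_le _ _
        _ = Y.ncard + 1 := by
            rw [Set.ncard_image_of_injective _ Subtype.val_injective]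
        _ ≤ (k - 1) + 1 := by omega
        _ = k := by omega
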